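/- The invariant θ is preserved by generalized cospectrality: if H is an n-vertex graph generalized cospectral with an n-vertex graph G, then θ(H) = θ(G). -/

import Mathlib

open Polynomial Matrix BigOperators

/-- The all-ones matrix J. -/
def Jmat (n : ℕ) : Matrix (Fin n) (Fin n) ℤ := Matrix.of fun _ _ => 1

/-- The adjacency matrix of a graph, over ℤ. -/
def adjMat {n : ℕ} (G : SimpleGraph (Fin n)) [DecidableRel G.Adj] : Matrix (Fin n) (Fin n) ℤ :=
  G.adjMatrix ℤ

/-- The walk matrix W(G) = [e, Ae, …, A^{n-1}e] (column j is A^j e). -/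
def walkMat {n : ℕ} (G : SimpleGraph (Fin n)) [DecidableRel G.Adj] : Matrix (Fin n) (Fin n) ℤ :=
  Matrix.of fun i j => ((adjMat G ^ (j : ℕ)) *ᵥ fun _ => (1 : ℤ)) i

lemma adjMatR_isHermitian {n : ℕ} (G : SimpleGraph (Fin n)) [DecidableRel G.Adj] :
    (G.adjMatrix ℝ).IsHermitian := by
  unfold Matrix.IsHermitian
  ext i j
  simp [Matrix.conjTranspose_apply, SimpleGraph.adjMatrix_apply, G.adj_comm i j]

/-- The (real) eigenvalues α_1, …, α_n of the adjacency matrix of a graph. -/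
noncomputable def graphEig {n : ℕ} (G : SimpleGraph (Fin n)) [DecidableRel G.Adj] : Fin n → ℝ :=
  (adjMatR_isHermitian G).eigenvalues

/-- The discriminant Δ(G) = ∏_{i>j} (α_i - α_j)^2; it is an integer, so we may recover it
from the real product by taking the floor. -/
noncomputable def discG {n : ℕ} (G : SimpleGraph (Fin n)) [DecidableRel G.Adj] : ℤ :=
  ⌊∏ i : Fin n, ∏ j : Fin n,
      if (j : ℕ) < (i : ℕ) then (graphEig G i - graphEig G j) ^ 2 else 1⌋

/-- θ(G) = gcd(2^{-⌊n/2⌋}·det W(G), Δ(G)).  (Here `det W / 2 ^ (n / 2)` is integer division,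
which agrees with exact division since 2^⌊n/2⌋ always divides det W.) -/
noncomputable def thetaG {n : ℕ} (G : SimpleGraph (Fin n)) [DecidableRel G.Adj] : ℕ :=
  Int.gcd ((walkMat G).det / 2 ^ (n / 2)) (discG G)

/-- Two graphs are generalized cospectral if A and A+J of the two graphs have, respectively,
the same characteristic polynomials. -/
def genCospectral {n : ℕ} (G H : SimpleGraph (Fin n)) [DecidableRel G.Adj]
    [DecidableRel H.Adj] : Prop :=
  (adjMat G).charpoly = (adjMat H).charpoly ∧
    (adjMat G + Jmat n).charpoly = (adjMat H + Jmat n).charpoly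

/-- G is determined by its generalized spectrum (DGS). -/
def IsDGS {n : ℕ} (G : SimpleGraph (Fin n)) [DecidableRel G.Adj] : Prop :=
  ∀ (H : SimpleGraph (Fin n)) [DecidableRel H.Adj], genCospectral G H → Nonempty (G ≃g H)

-- Part A

lemma adjMat_map_cast {n : ℕ} (G : SimpleGraph (Fin n)) [DecidableRel G.Adj] :
    (adjMat G).map (Int.castRingHom ℝ) = G.adjMatrix ℝ := by
  ext i j
  by_cases h : G.Adj i j <;> simp [adjMat, h]

lemma charpolyR_eq {n : ℕ} (G : SimpleGraph (Fin n)) [DecidableRel G.Adj] :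
    (G.adjMatrix ℝ).charpoly = (adjMat G).charpoly.map (Int.castRingHom ℝ) := by
  rw [← Matrix.charpoly_map, adjMat_map_cast]

lemma charpoly_conj {n : ℕ} (U V M : Matrix (Fin n) (Fin n) ℝ) (hUV : U * V = 1) :
    (U * M * V).charpoly = M.charpoly := by
  set UC := (C : ℝ →+* ℝ[X]).mapMatrix U with hUC
  set VC := (C : ℝ →+* ℝ[X]).mapMatrix V with hVC
  have hUVC : UC * VC = 1 := by
    rw [hUC, hVC, ← _root_.map_mul, hUV, _root_.map_one]
  have hchar : UC * charmatrix M * VC = charmatrix (U * M * V) := by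
    unfold Matrix.charmatrix
    calc UC * (scalar (Fin n) X - (C : ℝ →+* ℝ[X]).mapMatrix M) * VC
        = UC * scalar (Fin n) X * VC - UC * (C : ℝ →+* ℝ[X]).mapMatrix M * VC := by
          rw [mul_sub, sub_mul]
      _ = scalar (Fin n) X - (C : ℝ →+* ℝ[X]).mapMatrix (U * M * V) := by
          rw [← Matrix.scalar_commute X (fun r' => Commute.all X r') UC, mul_assoc _ UC VC, hUVC,
            mul_one, _root_.map_mul, _root_.map_mul]
  rw [Matrix.charpoly, Matrix.charpoly, ← hchar, det_mul, det_mul]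
  rw [mul_comm (UC.det * (charmatrix M).det), ← mul_assoc, mul_comm VC.det, ← det_mul, hUVC,
    det_one, one_mul]

lemma charpoly_eq_prod {n : ℕ} (G : SimpleGraph (Fin n)) [DecidableRel G.Adj] :
    (G.adjMatrix ℝ).charpoly = ∏ i, (X - C (graphEig G i)) := by
  have hA := adjMatR_isHermitian G
  have h1 : (G.adjMatrix ℝ).charpoly
      = (diagonal (RCLike.ofReal ∘ hA.eigenvalues)).charpoly := by
    conv_lhs => rw [hA.spectral_theorem]
    exact charpoly_conj _ _ _
      ((Matrix.mem_unitaryGroup_iff).mp (hA.eigenvectorUnitary).2)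
  rw [h1, Matrix.charpoly_of_upperTriangular _ (Matrix.blockTriangular_diagonal _)]
  refine Finset.prod_congr rfl fun i _ => ?_
  simp [graphEig, RCLike.ofReal_real_eq_id]

lemma prod_as_multiset {n : ℕ} (f : Fin n → ℝ) :
    ∏ i, (X - C (f i)) = (Multiset.map (fun a => X - C a) (Multiset.map f Finset.univ.val)).prod := by
  rw [Multiset.map_map, Finset.prod_eq_multiset_prod]
  rfl

lemma eval_derivative_prod {n : ℕ} (f : Fin n → ℝ) (i : Fin n) :
    eval (f i) (derivative (∏ j, (X - C (f j)))) = ∏ j ∈ Finset.univ.erase i, (f i - f j) := by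
  have hsplit : (∏ j, (X - C (f j)))
      = (X - C (f i)) * ∏ j ∈ Finset.univ.erase i, (X - C (f j)) :=
    (Finset.mul_prod_erase Finset.univ _ (Finset.mem_univ i)).symm
  rw [hsplit, derivative_mul]
  simp [Polynomial.eval_prod]

noncomputable def discProd {n : ℕ} (f : Fin n → ℝ) : ℝ :=
  ∏ i : Fin n, ∏ j : Fin n, if (j : ℕ) < (i : ℕ) then (f i - f j) ^ 2 else 1

lemma discProd_nonneg {n : ℕ} (f : Fin n → ℝ) : 0 ≤ discProd f := by
  refine Finset.prod_nonneg fun i _ => Finset.prod_nonneg fun j _ => ?_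
  split
  · exact sq_nonneg _
  · exact zero_le_one

lemma discProd_sq {n : ℕ} (f : Fin n → ℝ) :
    discProd f * discProd f = (∏ i, ∏ j ∈ Finset.univ.erase i, (f i - f j)) ^ 2 := by
  have hD2 : discProd f = ∏ i : Fin n, ∏ j : Fin n, if (i : ℕ) < (j : ℕ) then (f i - f j) ^ 2 else 1 := by
    rw [discProd, Finset.prod_comm]
    refine Finset.prod_congr rfl fun i _ => Finset.prod_congr rfl fun j _ => ?_
    have : (f j - f i) ^ 2 = (f i - f j) ^ 2 := by ring
    rw [this]
  nth_rewrite 2 [hD2]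
  rw [discProd, ← Finset.prod_mul_distrib]
  rw [← Finset.prod_pow]
  refine Finset.prod_congr rfl fun i _ => ?_
  rw [← Finset.prod_mul_distrib]
  have : ∀ j ∈ Finset.univ.erase i, (f i - f j) ^ 2 = (f i - f j) ^ 2 := fun _ _ => rfl
  rw [show (∏ j ∈ Finset.univ.erase i, (f i - f j)) ^ 2
      = ∏ j ∈ Finset.univ.erase i, (f i - f j) ^ 2 from (Finset.prod_pow _ _ _).symm]
  rw [← Finset.filter_ne', Finset.prod_filter]
  refine Finset.prod_congr rfl fun j _ => ?_
  rcases Nat.lt_trichotomy (j : ℕ) (i : ℕ) with hlt | heq | hgt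
  · have h1 : ¬ (i : ℕ) < (j : ℕ) := by omega
    have h2 : j ≠ i := fun hh => by simp [hh] at hlt
    simp [hlt, h1, h2]
  · have h2 : j = i := Fin.ext heq
    simp [h2]
  · have h1 : ¬ (j : ℕ) < (i : ℕ) := by omega
    have h2 : j ≠ i := fun hh => by simp [hh] at hgt
    simp [hgt, h1, h2]

lemma discProd_eig_eq {n : ℕ} (G H : SimpleGraph (Fin n)) [DecidableRel G.Adj]
    [DecidableRel H.Adj] (h : (adjMat G).charpoly = (adjMat H).charpoly) :
    discProd (graphEig G) = discProd (graphEig H) := by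
  have hp : ∏ i, (X - C (graphEig G i)) = ∏ i, (X - C (graphEig H i)) := by
    rw [← charpoly_eq_prod, ← charpoly_eq_prod, charpolyR_eq, charpolyR_eq, h]
  have hroots : Multiset.map (graphEig G) Finset.univ.val
      = Multiset.map (graphEig H) Finset.univ.val := by
    have := congrArg Polynomial.roots hp
    rwa [prod_as_multiset (graphEig G), prod_as_multiset (graphEig H),
      Polynomial.roots_multiset_prod_X_sub_C, Polynomial.roots_multiset_prod_X_sub_C] at this
  have hE : ∏ i, eval (graphEig G i) (derivative (∏ k, (X - C (graphEig G k))))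
      = ∏ i, eval (graphEig H i) (derivative (∏ k, (X - C (graphEig H k)))) := by
    calc ∏ i, eval (graphEig G i) (derivative (∏ k, (X - C (graphEig G k))))
        = ((Multiset.map (graphEig G) Finset.univ.val).map
            (fun a => eval a (derivative (∏ k, (X - C (graphEig G k)))))).prod := by
          rw [Multiset.map_map, Finset.prod_eq_multiset_prod]; rfl
      _ = ((Multiset.map (graphEig H) Finset.univ.val).map
            (fun a => eval a (derivative (∏ k, (X - C (graphEig H k)))))).prod := by
          rw [hroots, hp]
      _ = ∏ i, eval (graphEig H i) (derivative (∏ k, (X - C (graphEig H k)))) := by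
          rw [Multiset.map_map, Finset.prod_eq_multiset_prod]; rfl
  have hsqG := discProd_sq (graphEig G)
  have hsqH := discProd_sq (graphEig H)
  rw [← mul_self_inj (discProd_nonneg _) (discProd_nonneg _), hsqG, hsqH]
  congr 1
  calc ∏ i, ∏ j ∈ Finset.univ.erase i, (graphEig G i - graphEig G j)
      = ∏ i, eval (graphEig G i) (derivative (∏ k, (X - C (graphEig G k)))) := by
        refine Finset.prod_congr rfl fun i _ => (eval_derivative_prod _ i).symm
    _ = ∏ i, eval (graphEig H i) (derivative (∏ k, (X - C (graphEig H k)))) := hE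
    _ = ∏ i, ∏ j ∈ Finset.univ.erase i, (graphEig H i - graphEig H j) := by
        refine Finset.prod_congr rfl fun i _ => eval_derivative_prod _ i

lemma discG_eq {n : ℕ} (G H : SimpleGraph (Fin n)) [DecidableRel G.Adj]
    [DecidableRel H.Adj] (h : (adjMat G).charpoly = (adjMat H).charpoly) :
    discG G = discG H := by
  unfold discG
  rw [show (∏ i : Fin n, ∏ j : Fin n,
      if (j : ℕ) < (i : ℕ) then (graphEig G i - graphEig G j) ^ 2 else 1) = discProd (graphEig G)
    from rfl, show (∏ i : Fin n, ∏ j : Fin n,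
      if (j : ℕ) < (i : ℕ) then (graphEig H i - graphEig H j) ^ 2 else 1) = discProd (graphEig H)
    from rfl, discProd_eig_eq G H h]

/-- walk numbers e^T A^m e -/
def wkI {n : ℕ} (A : Matrix (Fin n) (Fin n) ℤ) (m : ℕ) : ℤ :=
  ∑ i, ((A ^ m) *ᵥ fun _ => (1 : ℤ)) i

noncomputable def Spoly (n : ℕ) (φ : ℝ[X]) (k : ℕ) : ℝ[X] :=
  ∑ t ∈ Finset.range (n - k), C (φ.coeff (k + 1 + t)) * X ^ t

noncomputable def wkR {n : ℕ} (M : Matrix (Fin n) (Fin n) ℝ) (m : ℕ) : ℝ :=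
  ∑ i, ((M ^ m) *ᵥ fun _ => (1 : ℝ)) i

lemma eval_charpoly {n : ℕ} (M : Matrix (Fin n) (Fin n) ℝ) (x : ℝ) :
    eval x M.charpoly = (scalar (Fin n) x - M).det := by
  rw [Matrix.charpoly, show eval x (charmatrix M).det = (evalRingHom x) (charmatrix M).det from rfl,
    RingHom.map_det]
  congr 1
  ext i j
  by_cases hij : i = j
  · subst hij
    simp [charmatrix_apply_eq, Matrix.scalar_apply]
  · simp [charmatrix_apply_ne _ _ _ hij, Matrix.scalar_apply, Matrix.diagonal_apply_ne _ hij]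

lemma Spoly_rec {n : ℕ} (φ : ℝ[X]) (hφ : φ.natDegree ≤ n) (k : ℕ) (x : ℝ) :
    eval x (Spoly n φ k) = x * eval x (Spoly n φ (k + 1)) + φ.coeff (k + 1) := by
  rcases lt_or_ge k n with hk | hk
  · have hnk : n - k = (n - (k + 1)) + 1 := by omega
    rw [Spoly, Spoly, hnk, Polynomial.eval_finset_sum, Polynomial.eval_finset_sum,
      Finset.sum_range_succ']
    simp only [eval_mul, eval_C, eval_pow, eval_X, pow_zero, mul_one]
    rw [add_comm (k + 1) 0]
    simp only [Nat.zero_add]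
    rw [Finset.mul_sum]
    congr 1
    refine Finset.sum_congr rfl fun t _ => ?_
    have : k + 1 + (t + 1) = k + 1 + 1 + t := by omega
    rw [this]
    ring
  · have h1 : n - k = 0 := by omega
    have h2 : n - (k + 1) = 0 := by omega
    have h3 : φ.coeff (k + 1) = 0 :=
      Polynomial.coeff_eq_zero_of_natDegree_lt (by omega)
    simp [Spoly, h1, h2, h3]

lemma Spoly_top {n : ℕ} (φ : ℝ[X]) : Spoly n φ n = 0 := by
  simp [Spoly]

lemma eval_eq_Spoly0 {n : ℕ} (φ : ℝ[X]) (hφ : φ.natDegree ≤ n) (x : ℝ) :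
    eval x φ = x * eval x (Spoly n φ 0) + φ.coeff 0 := by
  rw [Polynomial.eval_eq_sum_range' (Nat.lt_succ_of_le hφ), Finset.sum_range_succ']
  simp only [pow_zero, mul_one]
  congr 1
  rw [Spoly, Polynomial.eval_finset_sum, Finset.mul_sum]
  simp only [Nat.sub_zero]
  refine Finset.sum_congr rfl fun t _ => ?_
  simp only [eval_mul, eval_C, eval_pow, eval_X]
  rw [show (0 : ℕ) + 1 + t = t + 1 by omega]
  ring

lemma sum_matrix_mulVec {n : ℕ} {α : Type*} [CommRing α] (s : Finset ℕ)
    (N : ℕ → Matrix (Fin n) (Fin n) α) (v : Fin n → α) :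
    (∑ k ∈ s, N k) *ᵥ v = ∑ k ∈ s, (N k) *ᵥ v := by
  ext i
  simp [Matrix.mulVec, dotProduct, Finset.sum_apply, Matrix.sum_apply, Finset.sum_mul]
  rw [Finset.sum_comm]

lemma mulVec_finset_sum {n : ℕ} {α : Type*} [CommRing α] (s : Finset ℕ)
    (M : Matrix (Fin n) (Fin n) α) (v : ℕ → Fin n → α) :
    M *ᵥ (∑ k ∈ s, v k) = ∑ k ∈ s, M *ᵥ (v k) := by
  ext i
  simp [Matrix.mulVec, dotProduct, Finset.sum_apply, Finset.mul_sum]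
  rw [Finset.sum_comm]

/-- The key telescoping identity. -/
lemma telescope {n : ℕ} (M : Matrix (Fin n) (Fin n) ℝ) (x : ℝ) :
    (scalar (Fin n) x - M) *ᵥ
        (∑ k ∈ Finset.range n, eval x (Spoly n M.charpoly k) • ((M ^ k) *ᵥ fun _ => (1:ℝ)))
      = eval x M.charpoly • (fun _ => (1 : ℝ)) := by
  set φ := M.charpoly with hφdef
  have hdeg : φ.natDegree ≤ n := by
    rw [hφdef, Matrix.charpoly_natDegree_eq_dim, Fintype.card_fin]
  set u : ℕ → (Fin n → ℝ) := fun k => (M ^ k) *ᵥ fun _ => (1:ℝ) with hu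
  set s : ℕ → ℝ := fun k => eval x (Spoly n φ k) with hs
  have hMu : ∀ k, M *ᵥ u k = u (k + 1) := by
    intro k
    rw [hu]
    simp only []
    rw [Matrix.mulVec_mulVec, ← pow_succ']
  have hCH : ∑ k ∈ Finset.range (n + 1), φ.coeff k • u k = 0 := by
    have h0 : (aeval M) φ = 0 := Matrix.aeval_self_charpoly M
    rw [Polynomial.aeval_eq_sum_range' (Nat.lt_succ_of_le hdeg)] at h0
    have := congrArg (fun (N : Matrix (Fin n) (Fin n) ℝ) => N *ᵥ fun _ => (1:ℝ)) h0
    simp only [sum_matrix_mulVec, Matrix.zero_mulVec] at this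
    rw [← this]
    refine Finset.sum_congr rfl fun k _ => ?_
    rw [Matrix.smul_mulVec]
  rw [Matrix.sub_mulVec]
  have hscal : scalar (Fin n) x *ᵥ (∑ k ∈ Finset.range n, s k • u k)
      = ∑ k ∈ Finset.range n, (x * s k) • u k := by
    have hxone : scalar (Fin n) x = x • (1 : Matrix (Fin n) (Fin n) ℝ) := by
      ext i j
      by_cases hij : i = j <;> simp [Matrix.scalar_apply, hij, Matrix.one_apply]
    rw [hxone, Matrix.smul_mulVec, Matrix.one_mulVec, Finset.smul_sum]
    refine Finset.sum_congr rfl fun k _ => ?_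
    rw [smul_smul]
  have hmv : M *ᵥ (∑ k ∈ Finset.range n, s k • u k)
      = ∑ k ∈ Finset.range n, s k • u (k + 1) := by
    rw [mulVec_finset_sum]
    refine Finset.sum_congr rfl fun k _ => ?_
    rw [Matrix.mulVec_smul, hMu]
  rw [hscal, hmv]
  have hsk : ∀ k, s k = x * s (k + 1) + φ.coeff (k + 1) := fun k => Spoly_rec φ hdeg k x
  have step1 : ∑ k ∈ Finset.range n, s k • u (k + 1)
      = ∑ k ∈ Finset.range n, (x * s k) • u k - (x * s 0) • u 0
        + (∑ k ∈ Finset.range (n + 1), φ.coeff k • u k - φ.coeff 0 • u 0) := by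
    have e1 : ∀ k, s k • u (k+1) = (x * s (k+1)) • u (k+1) + φ.coeff (k+1) • u (k+1) := by
      intro k
      rw [hsk k, add_smul]
    rw [Finset.sum_congr rfl fun k _ => e1 k, Finset.sum_add_distrib]
    congr 1
    · -- ∑ k ∈ range n, (x * s (k+1)) • u (k+1) = ∑ k ∈ range n, (x*s k) • u k - (x*s 0) • u 0
      have e2 : ∑ k ∈ Finset.range (n + 1), (x * s k) • u k
          = (∑ k ∈ Finset.range n, (x * s (k+1)) • u (k+1)) + (x * s 0) • u 0 :=
        Finset.sum_range_succ' _ n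
      have e3 : ∑ k ∈ Finset.range (n + 1), (x * s k) • u k
          = ∑ k ∈ Finset.range n, (x * s k) • u k := by
        rw [Finset.sum_range_succ, hs]
        simp only []
        rw [Spoly_top]
        simp
      rw [← e3, e2]
      abel
    · have e4 : ∑ k ∈ Finset.range (n + 1), φ.coeff k • u k
          = (∑ k ∈ Finset.range n, φ.coeff (k+1) • u (k+1)) + φ.coeff 0 • u 0 :=
        Finset.sum_range_succ' _ n
      rw [e4]
      abel
  rw [step1, hCH]
  have hu0 : u 0 = fun _ => (1:ℝ) := by
    rw [hu]
    simp only [pow_zero]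
    rw [Matrix.one_mulVec]
  have : eval x φ = x * s 0 + φ.coeff 0 := eval_eq_Spoly0 φ hdeg x
  rw [this, hu0]
  ext i
  simp [add_smul]
  ring

lemma sum_entries_smul_pow {n : ℕ} (A : Matrix (Fin n) (Fin n) ℤ) (c : ℕ → ℤ) (s : Finset ℕ)
    (m : ℕ) :
    (∑ i, (((∑ k ∈ s, c k • A ^ (k + m))) *ᵥ fun _ => (1:ℤ)) i)
      = ∑ k ∈ s, c k * wkI A (k + m) := by
  rw [sum_matrix_mulVec]
  rw [show (∑ i, (∑ k ∈ s, (c k • A ^ (k + m)) *ᵥ fun _ => (1:ℤ)) i)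
      = ∑ k ∈ s, ∑ i, ((c k • A ^ (k + m)) *ᵥ fun _ => (1:ℤ)) i from by
    rw [← Finset.sum_comm]
    refine Finset.sum_congr rfl fun i _ => ?_
    rw [Finset.sum_apply]]
  refine Finset.sum_congr rfl fun k _ => ?_
  rw [wkI, Finset.mul_sum]
  refine Finset.sum_congr rfl fun i _ => ?_
  rw [Matrix.smul_mulVec]
  simp

lemma wk_recurrence {n : ℕ} (A : Matrix (Fin n) (Fin n) ℤ) (m : ℕ) :
    ∑ k ∈ Finset.range (n + 1), A.charpoly.coeff k * wkI A (k + m) = 0 := by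
  have hdeg : A.charpoly.natDegree < n + 1 := by
    rw [Matrix.charpoly_natDegree_eq_dim, Fintype.card_fin]; omega
  have h0 : (aeval A) A.charpoly = 0 := Matrix.aeval_self_charpoly A
  rw [Polynomial.aeval_eq_sum_range' hdeg] at h0
  have h1 : (∑ k ∈ Finset.range (n + 1), A.charpoly.coeff k • A ^ k) * A ^ m = 0 := by
    rw [h0, zero_mul]
  rw [Finset.sum_mul] at h1
  have h2 : ∑ k ∈ Finset.range (n + 1), A.charpoly.coeff k • A ^ (k + m) = 0 := by
    rw [← h1]
    refine Finset.sum_congr rfl fun k _ => ?_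
    rw [smul_mul_assoc, pow_add]
  rw [← sum_entries_smul_pow A _ _ m, h2]
  simp

/-- The main identity: charpoly of M + J in terms of charpoly of M and walk numbers. -/
lemma charpoly_add_ones {n : ℕ} (M : Matrix (Fin n) (Fin n) ℝ) :
    (M + Matrix.of fun _ _ => (1:ℝ)).charpoly
      = M.charpoly - ∑ k ∈ Finset.range n, C (wkR M k) * Spoly n M.charpoly k := by
  apply Polynomial.eq_of_infinite_eval_eq
  have hfin : {x : ℝ | Polynomial.IsRoot M.charpoly x}.Finite :=
    Polynomial.finite_setOf_isRoot (M.charpoly_monic.ne_zero)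
  refine Set.Infinite.mono (s := {x : ℝ | Polynomial.IsRoot M.charpoly x}ᶜ) ?_ hfin.infinite_compl
  intro x hx
  simp only [Set.mem_compl_iff, Set.mem_setOf_eq, Polynomial.IsRoot] at hx
  simp only [Set.mem_setOf_eq]
  -- setup
  set N := scalar (Fin n) x - M with hN
  have hdetN : N.det = eval x M.charpoly := (_root_.eval_charpoly M x).symm
  have hdet : IsUnit N.det := by
    rw [hdetN]
    exact isUnit_iff_ne_zero.2 hx
  set U : Matrix (Fin n) (Fin 1) ℝ := Matrix.of fun i _ => (-1 : ℝ) with hU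
  set V : Matrix (Fin 1) (Fin n) ℝ := Matrix.of fun _ j => (1 : ℝ) with hV
  have hsplit : scalar (Fin n) x - (M + Matrix.of fun _ _ => (1:ℝ)) = N + U * V := by
    ext i j
    simp [hN, hU, hV, Matrix.mul_apply, Matrix.sub_apply, Matrix.add_apply]
    ring
  have hUV : (N + U * V).det = N.det * (1 + V * N⁻¹ * U).det :=
    Matrix.det_add_mul U V hdet
  -- compute the Fin 1 determinant
  have hfin1 : (1 + V * N⁻¹ * U).det = 1 - ∑ i, ∑ j, N⁻¹ i j := by
    rw [Matrix.det_fin_one]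
    simp only [Matrix.add_apply, Matrix.one_apply_eq, Matrix.mul_apply, hU, hV, Matrix.of_apply]
    rw [Finset.sum_comm' (f := fun i j => N⁻¹ i j) (t' := Finset.univ) (s' := fun _ => Finset.univ) (by simp)]
    simp [Finset.sum_neg_distrib, sub_eq_add_neg, Finset.sum_mul]
  -- telescope gives the value of the inverse sum
  set φ := M.charpoly with hφ
  set d := eval x φ with hd
  set vv := ∑ k ∈ Finset.range n, eval x (Spoly n φ k) • ((M ^ k) *ᵥ fun _ => (1:ℝ)) with hvv
  have htel : N *ᵥ vv = d • (fun _ => (1:ℝ)) := telescope M x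
  have hvvinv : vv = d • (N⁻¹ *ᵥ fun _ => (1:ℝ)) := by
    have h1 : N⁻¹ *ᵥ (N *ᵥ vv) = N⁻¹ *ᵥ (d • fun _ => (1:ℝ)) := by rw [htel]
    rw [Matrix.mulVec_mulVec, Matrix.nonsing_inv_mul N hdet, Matrix.one_mulVec,
      Matrix.mulVec_smul] at h1
    exact h1
  have hsum1 : ∑ i, vv i = d * ∑ i, ∑ j, N⁻¹ i j := by
    rw [hvvinv, Finset.mul_sum]
    refine Finset.sum_congr rfl fun i _ => ?_
    simp [Matrix.mulVec, dotProduct]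
  have hsum2 : ∑ i, vv i = ∑ k ∈ Finset.range n, eval x (Spoly n φ k) * wkR M k := by
    rw [hvv]
    rw [show (∑ i, (∑ k ∈ Finset.range n,
        eval x (Spoly n φ k) • ((M ^ k) *ᵥ fun _ => (1:ℝ))) i)
        = ∑ k ∈ Finset.range n, ∑ i, (eval x (Spoly n φ k) • ((M ^ k) *ᵥ fun _ => (1:ℝ))) i
      from by
        rw [← Finset.sum_comm]
        refine Finset.sum_congr rfl fun i _ => ?_
        rw [Finset.sum_apply]]
    refine Finset.sum_congr rfl fun k _ => ?_
    rw [wkR, Finset.mul_sum]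
    simp
  -- put together
  have lhs_eq : eval x (M + Matrix.of fun _ _ => (1:ℝ)).charpoly
      = d - ∑ k ∈ Finset.range n, eval x (Spoly n φ k) * wkR M k := by
    rw [_root_.eval_charpoly, hsplit, hUV, hfin1, hdetN, mul_sub, mul_one, ← hsum1, hsum2]
  rw [lhs_eq]
  rw [Polynomial.eval_sub, Polynomial.eval_finset_sum]
  congr 1
  refine Finset.sum_congr rfl fun k _ => ?_
  rw [Polynomial.eval_mul, Polynomial.eval_C, mul_comm]

lemma extract_coeffs {n : ℕ} (φ : ℝ[X]) (hmon : φ.Monic) (hdeg : φ.natDegree = n)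
    (d : ℕ → ℝ) (h : ∑ k ∈ Finset.range n, C (d k) * Spoly n φ k = 0) :
    ∀ k, k < n → d k = 0 := by
  intro k
  induction k using Nat.strong_induction_on with
  | _ k IH =>
  intro hk
  have hco := congrArg (fun p => Polynomial.coeff p (n - 1 - k)) h
  simp only [Polynomial.finset_sum_coeff, Polynomial.coeff_zero] at hco
  have hterm : ∀ j ∈ Finset.range n, (C (d j) * Spoly n φ j).coeff (n - 1 - k)
      = d j * (if n - 1 - k < n - j then φ.coeff (j + 1 + (n - 1 - k)) else 0) := by
    intro j _
    rw [Polynomial.coeff_C_mul, Spoly, Polynomial.finset_sum_coeff]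
    congr 1
    have hterm2 : ∀ t ∈ Finset.range (n - j), (C (φ.coeff (j+1+t)) * X ^ t).coeff (n-1-k)
        = if n-1-k = t then φ.coeff (j+1+t) else 0 := by
      intro t _
      rw [Polynomial.coeff_C_mul, Polynomial.coeff_X_pow]
      by_cases h' : n-1-k = t
      · simp [h']
      · simp [h']
    rw [Finset.sum_congr rfl hterm2, Finset.sum_ite_eq (Finset.range (n-j)) (n-1-k)
      (fun t => φ.coeff (j+1+t))]
    simp [Finset.mem_range]
  rw [Finset.sum_congr rfl hterm] at hco
  rw [Finset.sum_eq_single k] at hco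
  · have ht : n - 1 - k < n - k := by omega
    rw [if_pos ht, show k + 1 + (n - 1 - k) = n from by omega, ← hdeg,
      hmon.coeff_natDegree, mul_one] at hco
    exact hco
  · intro j hj hjk
    rcases lt_or_gt_of_ne hjk with hlt | hgt
    · rw [IH j hlt (by omega), zero_mul]
    · rw [if_neg (by simp only [Finset.mem_range] at hj; omega), mul_zero]
  · intro hkk
    exact absurd (Finset.mem_range.2 hk) hkk

lemma wkI_eq_of_cospectral {n : ℕ} (A B : Matrix (Fin n) (Fin n) ℤ)
    (h1 : A.charpoly = B.charpoly) (h2 : (A + Jmat n).charpoly = (B + Jmat n).charpoly) :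
    ∀ m, wkI A m = wkI B m := by
  -- real versions
  set AR := A.map (Int.castRingHom ℝ) with hAR
  set BR := B.map (Int.castRingHom ℝ) with hBR
  have hwcast : ∀ (Z : Matrix (Fin n) (Fin n) ℤ) (k : ℕ),
      wkR (Z.map (Int.castRingHom ℝ)) k = ((wkI Z k : ℤ) : ℝ) := by
    intro Z k
    rw [wkI, wkR]
    push_cast
    refine Finset.sum_congr rfl fun i _ => ?_
    have hpow : (Z.map (Int.castRingHom ℝ)) ^ k = (Z ^ k).map (Int.castRingHom ℝ) := by
      rw [show Z.map (Int.castRingHom ℝ) = (Int.castRingHom ℝ).mapMatrix Z from rfl, ← map_pow]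
      rfl
    rw [hpow]
    simp [Matrix.mulVec, dotProduct]
  have hchR : AR.charpoly = BR.charpoly := by
    rw [hAR, hBR, Matrix.charpoly_map, Matrix.charpoly_map, h1]
  have hJmap : ∀ (Z : Matrix (Fin n) (Fin n) ℤ),
      ((Z + Jmat n).map (Int.castRingHom ℝ))
        = Z.map (Int.castRingHom ℝ) + Matrix.of fun _ _ => (1:ℝ) := by
    intro Z
    ext i j
    simp [Jmat, Matrix.map_apply, Matrix.add_apply]
  have hchJR : (AR + Matrix.of fun _ _ => (1:ℝ)).charpoly
      = (BR + Matrix.of fun _ _ => (1:ℝ)).charpoly := by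
    rw [hAR, hBR, ← hJmap A, ← hJmap B, Matrix.charpoly_map, Matrix.charpoly_map, h2]
  -- identity application
  have hidA := charpoly_add_ones AR
  have hidB := charpoly_add_ones BR
  rw [hchJR, hidB, hchR] at hidA
  have hzero : ∑ k ∈ Finset.range n,
      C (wkR AR k - wkR BR k) * Spoly n BR.charpoly k = 0 := by
    have := sub_eq_zero.2 hidA
    rw [← this]
    rw [sub_sub_sub_cancel_left, ← Finset.sum_sub_distrib]
    refine Finset.sum_congr rfl fun k _ => ?_
    rw [← sub_mul, ← Polynomial.C_sub]
  have hlt : ∀ k, k < n → wkI A k = wkI B k := by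
    intro k hk
    have := extract_coeffs BR.charpoly BR.charpoly_monic
      (by rw [Matrix.charpoly_natDegree_eq_dim, Fintype.card_fin])
      (fun k => wkR AR k - wkR BR k) hzero k hk
    have hcast : ((wkI A k : ℤ) : ℝ) = ((wkI B k : ℤ) : ℝ) := by
      rw [← hwcast A k, ← hwcast B k, ← sub_eq_zero]
      exact this
    exact_mod_cast hcast
  -- extend by the common linear recurrence
  intro m
  induction m using Nat.strong_induction_on with
  | _ m IH =>
  rcases lt_or_ge m n with hm | hm
  · exact hlt m hm
  · have hrA := wk_recurrence A (m - n)
    have hrB := wk_recurrence B (m - n)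
    rw [Finset.sum_range_succ] at hrA hrB
    have hcn : A.charpoly.coeff n = 1 := by
      have := A.charpoly_monic.coeff_natDegree
      rwa [Matrix.charpoly_natDegree_eq_dim, Fintype.card_fin] at this
    have hcnB : B.charpoly.coeff n = 1 := by
      have := B.charpoly_monic.coeff_natDegree
      rwa [Matrix.charpoly_natDegree_eq_dim, Fintype.card_fin] at this
    rw [hcn, one_mul, show n + (m - n) = m from by omega] at hrA
    rw [hcnB, one_mul, show n + (m - n) = m from by omega] at hrB
    have hsums : ∑ k ∈ Finset.range n, A.charpoly.coeff k * wkI A (k + (m - n))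
        = ∑ k ∈ Finset.range n, B.charpoly.coeff k * wkI B (k + (m - n)) := by
      refine Finset.sum_congr rfl fun k hkmem => ?_
      rw [h1, IH (k + (m - n)) (by simp only [Finset.mem_range] at hkmem; omega)]
    omega

lemma dot_pow_eq {n : ℕ} (G : SimpleGraph (Fin n)) [DecidableRel G.Adj] (j k : ℕ) :
    ((adjMat G ^ j) *ᵥ fun _ => (1:ℤ)) ⬝ᵥ ((adjMat G ^ k) *ᵥ fun _ => (1:ℤ))
      = wkI (adjMat G) (j + k) := by
  have hsym : (adjMat G ^ j)ᵀ = adjMat G ^ j := by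
    unfold adjMat
    rw [Matrix.transpose_pow, SimpleGraph.transpose_adjMatrix]
  conv_lhs => rw [← hsym]
  rw [Matrix.mulVec_transpose, ← dotProduct_mulVec, Matrix.mulVec_mulVec, ← pow_add]
  simp [dotProduct, wkI]

lemma even_xAx {n : ℕ} (G : SimpleGraph (Fin n)) [DecidableRel G.Adj] (x : Fin n → ℤ) :
    2 ∣ x ⬝ᵥ (adjMat G *ᵥ x) := by
  have h2 : ((2 : ℕ) : ℤ) ∣ x ⬝ᵥ (adjMat G *ᵥ x) := by
    rw [← ZMod.intCast_zmod_eq_zero_iff_dvd]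
    have hexp : ((x ⬝ᵥ (adjMat G *ᵥ x) : ℤ) : ZMod 2)
        = ∑ p ∈ (Finset.univ : Finset (Fin n × Fin n)),
            ((x p.1 * adjMat G p.1 p.2 * x p.2 : ℤ) : ZMod 2) := by
      rw [dotProduct]
      push_cast
      rw [← Finset.univ_product_univ, Finset.sum_product]
      refine Finset.sum_congr rfl fun i _ => ?_
      rw [Matrix.mulVec, dotProduct]
      push_cast
      rw [Finset.mul_sum]
      refine Finset.sum_congr rfl fun j _ => ?_
      ring
    rw [hexp]
    refine Finset.sum_involution (fun p _ => (p.2, p.1)) ?_ ?_ ?_ ?_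
    · intro p _
      have hsymm : adjMat G p.2 p.1 = adjMat G p.1 p.2 := by
        simp [adjMat, SimpleGraph.adjMatrix_apply, G.adj_comm]
      have : ((x p.2 * adjMat G p.2 p.1 * x p.1 : ℤ) : ZMod 2)
          = ((x p.1 * adjMat G p.1 p.2 * x p.2 : ℤ) : ZMod 2) := by
        rw [hsymm]; ring_nf
      rw [this, ← two_mul, show (2 : ZMod 2) = 0 from rfl, zero_mul]
    · intro p _ hf hswap
      have hp : p.2 = p.1 := congrArg Prod.fst hswap
      apply hf
      rw [show p.1 = p.2 from hp.symm]
      simp [adjMat]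
    · intro p _; exact Finset.mem_univ _
    · intro p _; rfl
  exact_mod_cast h2

lemma even_dot_self_sub {n : ℕ} (x : Fin n → ℤ) :
    2 ∣ (x ⬝ᵥ x - ∑ i, x i) := by
  rw [dotProduct, ← Finset.sum_sub_distrib]
  refine Finset.dvd_sum fun i _ => ?_
  have : x i * x i - x i = (x i - 1) * ((x i - 1) + 1) := by ring
  rw [this]
  exact (Int.even_mul_succ_self (x i - 1)).two_dvd

lemma wk_even {n : ℕ} (G : SimpleGraph (Fin n)) [DecidableRel G.Adj] :
    ∀ m, 1 ≤ m → 2 ∣ wkI (adjMat G) m := by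
  intro m
  induction m using Nat.strong_induction_on with
  | _ m IH =>
  intro hm
  rcases Nat.even_or_odd m with he | ho
  · obtain ⟨k, hk⟩ := he
    have hk1 : 1 ≤ k := by omega
    have e1 : wkI (adjMat G) m
        = ((adjMat G ^ k) *ᵥ fun _ => (1:ℤ)) ⬝ᵥ ((adjMat G ^ k) *ᵥ fun _ => (1:ℤ)) := by
      rw [dot_pow_eq, ← hk]
    have e2 : (∑ i, ((adjMat G ^ k) *ᵥ fun _ => (1:ℤ)) i) = wkI (adjMat G) k := rfl
    have hd := even_dot_self_sub ((adjMat G ^ k) *ᵥ fun _ => (1:ℤ))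
    rw [e2] at hd
    have hk2 := IH k (by omega) hk1
    omega
  · obtain ⟨k, hk⟩ := ho
    have e1 : wkI (adjMat G) m
        = ((adjMat G ^ k) *ᵥ fun _ => (1:ℤ)) ⬝ᵥ
            (adjMat G *ᵥ ((adjMat G ^ k) *ᵥ fun _ => (1:ℤ))) := by
      rw [Matrix.mulVec_mulVec, ← pow_succ', dot_pow_eq, hk]
      congr 1
      omega
    rw [e1]
    exact even_xAx G _

lemma gram_walk {n : ℕ} (G : SimpleGraph (Fin n)) [DecidableRel G.Adj] :
    (walkMat G)ᵀ * walkMat G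
      = Matrix.of (fun j k : Fin n => wkI (adjMat G) ((j : ℕ) + (k : ℕ))) := by
  ext j k
  rw [Matrix.mul_apply]
  simp only [Matrix.transpose_apply, walkMat, Matrix.of_apply]
  exact dot_pow_eq G j k

lemma det_gram_div {n : ℕ} (G : SimpleGraph (Fin n)) [DecidableRel G.Adj] (hn : 1 ≤ n) :
    (2:ℤ)^(n-1) ∣ ((walkMat G)ᵀ * walkMat G).det := by
  rw [gram_walk, Matrix.det_apply]
  refine Finset.dvd_sum fun σ _ => ?_
  rw [Units.smul_def, zsmul_eq_mul]
  refine Dvd.dvd.mul_left ?_ _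
  set i0 : Fin n := ⟨0, hn⟩ with hi0
  calc (2:ℤ)^(n-1) = ∏ _i ∈ Finset.univ.erase i0, 2 := by
        rw [Finset.prod_const, Finset.card_erase_of_mem (Finset.mem_univ _),
          Finset.card_univ, Fintype.card_fin]
    _ ∣ ∏ i ∈ Finset.univ.erase i0,
          (Matrix.of (fun j k : Fin n => wkI (adjMat G) ((j : ℕ) + (k : ℕ)))) (σ i) i := by
        refine Finset.prod_dvd_prod_of_dvd _ _ fun i hi => ?_
        simp only [Matrix.of_apply]
        refine wk_even G _ ?_
        have : i ≠ i0 := (Finset.mem_erase.1 hi).1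
        have : (i : ℕ) ≠ 0 := fun hc => this (by rw [hi0]; exact Fin.ext hc)
        omega
    _ ∣ ∏ i, (Matrix.of (fun j k : Fin n => wkI (adjMat G) ((j : ℕ) + (k : ℕ)))) (σ i) i :=
        Finset.prod_dvd_prod_of_subset _ _ _ (Finset.subset_univ _)

lemma pow_div_detW {n : ℕ} (G : SimpleGraph (Fin n)) [DecidableRel G.Adj] :
    (2:ℤ)^(n/2) ∣ (walkMat G).det := by
  rcases Nat.eq_zero_or_pos n with h0 | hn
  · subst h0
    simp
  have hdd : (2:ℤ)^(n-1) ∣ (walkMat G).det * (walkMat G).det := by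
    have := det_gram_div G hn
    rwa [Matrix.det_mul, Matrix.det_transpose] at this
  rcases eq_or_ne ((walkMat G).det) 0 with hz | hz
  · rw [hz]; exact dvd_zero _
  set a := (walkMat G).det.natAbs with ha
  have ha0 : a ≠ 0 := Int.natAbs_ne_zero.2 hz
  have hdd' : 2^(n-1) ∣ a * a := by
    have h' := Int.natAbs_dvd_natAbs.2 hdd
    simpa [Int.natAbs_mul, Int.natAbs_pow, ha] using h'
  have hv : n - 1 ≤ (a*a).factorization 2 :=
    (Nat.Prime.pow_dvd_iff_le_factorization Nat.prime_two (by positivity)).1 hdd'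
  rw [Nat.factorization_mul ha0 ha0] at hv
  simp only [Finsupp.add_apply] at hv
  have hv2 : n / 2 ≤ a.factorization 2 := by omega
  have hdvd : 2^(n/2) ∣ a :=
    (Nat.Prime.pow_dvd_iff_le_factorization Nat.prime_two ha0).2 hv2
  have : ((2:ℤ))^(n/2) ∣ ((a : ℕ) : ℤ) := by exact_mod_cast hdvd
  exact Int.dvd_natAbs.1 this

theorem thetaG_eq_of_genCospectral {n : ℕ} (G H : SimpleGraph (Fin n)) [DecidableRel G.Adj]
    [DecidableRel H.Adj] (h : genCospectral G H) :
    thetaG H = thetaG G := by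
  obtain ⟨h1, h2⟩ := h
  have hdisc : discG H = discG G := (discG_eq G H h1).symm
  have hwk : ∀ m, wkI (adjMat G) m = wkI (adjMat H) m := wkI_eq_of_cospectral _ _ h1 h2
  have hgram : (walkMat G)ᵀ * walkMat G = (walkMat H)ᵀ * walkMat H := by
    rw [gram_walk, gram_walk]
    ext j k
    simp only [Matrix.of_apply]
    rw [hwk]
  have hdet2 : (walkMat G).det * (walkMat G).det = (walkMat H).det * (walkMat H).det := by
    have hc := congrArg Matrix.det hgram
    rwa [Matrix.det_mul, Matrix.det_mul, Matrix.det_transpose, Matrix.det_transpose] at hc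
  have hcases : (walkMat H).det = (walkMat G).det ∨ (walkMat H).det = -(walkMat G).det :=
    mul_self_eq_mul_self_iff.1 hdet2.symm
  rcases hcases with he | hne
  · rw [thetaG, thetaG, he, hdisc]
  · rw [thetaG, thetaG, hne, hdisc]
    obtain ⟨c, hc⟩ := pow_div_detW G
    have h2z : (2:ℤ)^(n/2) ≠ 0 := pow_ne_zero _ two_ne_zero
    rw [hc, show -((2:ℤ)^(n/2) * c) = (2:ℤ)^(n/2) * (-c) from by ring,
      Int.mul_ediv_cancel_left _ h2z, Int.mul_ediv_cancel_left _ h2z, Int.neg_gcd]
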